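/- arXiv:math/0411146 — 2 statements merged into one kernel-verified Lean document; each statement's English description precedes it below -/
import Mathlib

section
/- Let A be the associative algebra of differential operators on the circle, spanned by t^m ∂^r for m ∈ ℤ, r ∈ ℕ (realized as operators on Laurent polynomials ℂ[t,t^{-1}]). Define a bilinear form c on A by c(t^{m1}∂^{r1}, t^{m2}∂^{r2}) = (-1)^{r1} δ_{r1+r2, m1+m2} r1! r2! C(m1, r1+r2+1), where C(m,k) = ⟨m⟩_k / k! is the generalized binomial coefficient of the integer m. Then the vector space Â = A ⊕ ℂκ with bracket [a + λκ, b + μκ] = ab - ba + c(a,b)κ is a Lie algebra; in particular c is a 2-cocycle: c(a,b) = -c(b,a) and c([a,b],d) + c([b,d],a) + c([d,a],b) = 0 for all a, b, d ∈ A. -/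
noncomputable section

/-- Laurent polynomials `ℂ[t,t⁻¹]`. -/
abbrev Lau : Type := LaurentPolynomial ℂ

/-- The derivative `∂ = d/dt`, sending `t^n ↦ n t^{n-1}`. -/
def D : Module.End ℂ Lau :=
  (AddMonoidAlgebra.coeffLinearEquiv ℂ).symm.toLinearMap ∘ₗ
  Finsupp.lsum ℂ (fun n : ℤ => ((n : ℂ) • Finsupp.lsingle (n - 1) : ℂ →ₗ[ℂ] (ℤ →₀ ℂ))) ∘ₗ
  (AddMonoidAlgebra.coeffLinearEquiv ℂ).toLinearMap

/-- Multiplication by `t^m`. -/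
def shiftOp (m : ℤ) : Module.End ℂ Lau :=
  LinearMap.mulLeft ℂ (LaurentPolynomial.T m)

/-- The differential operator `t^m ∂^r`. -/
def T (m : ℤ) (r : ℕ) : Module.End ℂ Lau := shiftOp m * D ^ r

/-- The falling factorial `⟨a⟩_k = a(a-1)⋯(a-k+1)`. -/
def ffac (a : ℂ) : ℕ → ℂ
  | 0 => 1
  | n + 1 => ffac a n * (a - n)

/-- Generalized binomial coefficient `C(m,k) = ⟨m⟩_k / k!` of an integer `m`. -/
def binomC (m : ℤ) (k : ℕ) : ℂ := ffac (m : ℂ) k / (Nat.factorial k : ℂ)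

/-- The `W_{1+∞}` two-cocycle on the generators:
`c(t^{m1}∂^{r1}, t^{m2}∂^{r2}) = (-1)^{r1} δ_{r1+r2,m1+m2} r1! r2! C(m1, r1+r2+1)`. -/
def cocycleVal (m1 : ℤ) (r1 : ℕ) (m2 : ℤ) (r2 : ℕ) : ℂ :=
  (-1) ^ r1 * (if ((r1 : ℤ) + r2 = m1 + m2) then 1 else 0) *
    (Nat.factorial r1 : ℂ) * (Nat.factorial r2 : ℂ) * binomC m1 (r1 + r2 + 1)

/-- The algebra `A` of differential operators on the circle. -/
def Walg : Submodule ℂ (Module.End ℂ Lau) :=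
  Submodule.span ℂ {P | ∃ (m : ℤ) (r : ℕ), P = T m r}

@[simp] lemma ffac_zero (a : ℂ) : ffac a 0 = 1 := rfl
lemma ffac_succ (a : ℂ) (n : ℕ) : ffac a (n+1) = ffac a n * (a - n) := rfl

lemma ffac_shift (x : ℂ) : ∀ k : ℕ, x * ffac (x-1) k = ffac x k * (x - k)
  | 0 => by simp
  | (k+1) => by
    rw [ffac_succ, ffac_succ, ← mul_assoc, ffac_shift x k]
    push_cast; ring

lemma ffac_reflect : ∀ (k : ℕ) (x : ℂ), ffac ((k:ℂ) - 1 - x) k = (-1)^k * ffac x k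
  | 0, x => by simp
  | (k+1), x => by
    have h1 : ((k+1:ℕ):ℂ) - 1 - x = (k:ℂ) - 1 - (x - 1) := by push_cast; ring
    rw [ffac_succ, h1, ffac_reflect k (x-1)]
    have h2 : ((k:ℂ) - 1 - (x-1)) - k = -x := by push_cast; ring
    rw [h2, ffac_succ]
    linear_combination (-(-1:ℂ)^k) * (ffac_shift x k)

/-- `⟨k⟩_r = r! * C(k,r)` for naturals -/
lemma ffac_nat (k : ℕ) : ∀ r : ℕ, ffac (k:ℂ) r = (r.factorial : ℂ) * (k.choose r)
  | 0 => by simp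
  | (r+1) => by
    rw [ffac_succ, ffac_nat k r]
    rcases le_or_gt (r+1) k with h | h
    · have hs : (k.choose (r+1) * (r+1) : ℕ) = (k.choose r) * (k - r) :=
        Nat.choose_succ_right_eq k r
      have hc : ((k - r : ℕ) : ℂ) = (k : ℂ) - r := by
        push_cast [Nat.cast_sub (by omega : r ≤ k)]; ring
      have := congrArg (fun n : ℕ => (n : ℂ)) hs
      push_cast at this
      rw [hc] at this
      rw [Nat.factorial_succ]
      push_cast
      linear_combination (-(r.factorial : ℂ)) * this
    · have h1 : k.choose (r+1) = 0 := Nat.choose_eq_zero_of_lt h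
      rcases lt_or_eq_of_le (by omega : k ≤ r) with h2 | h2
      · have : k.choose r = 0 := Nat.choose_eq_zero_of_lt h2
        simp [this, h1]
      · subst h2; simp [h1]

/-- `⟨-(j+1)⟩_r = (-1)^r * r! * C(j+r, r)` -/
lemma ffac_neg_nat (j : ℕ) : ∀ r : ℕ, ffac (-(j+1) : ℂ) r = (-1)^r * (r.factorial : ℂ) * ((j+r).choose r)
  | 0 => by simp
  | (r+1) => by
    rw [ffac_succ, ffac_neg_nat j r]
    have hs : ((j+r).succ * ((j+r).choose r) : ℕ) = ((j+r)+1).choose (r+1) * (r+1) :=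
      Nat.add_one_mul_choose_eq (j+r) r
    have := congrArg (fun n : ℕ => (n : ℂ)) hs
    push_cast at this
    rw [Nat.factorial_succ]
    have harg : (j:ℂ) + (r+1) = (j + r) + 1 := by ring
    push_cast
    rw [show (j + (r+1)) = (j + r) + 1 by omega]
    linear_combination (-1:ℂ)^(r) * (-1) * (r.factorial:ℂ) * this

open Finset in
/-- hockey stick -/
lemma hockey (p : ℕ) : ∀ N : ℕ, ∑ j ∈ range (N+1), (j+p).choose p = (N+p+1).choose (p+1)
  | 0 => by simp
  | (N+1) => by
    rw [Finset.sum_range_succ, hockey p N]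
    have : (N+1+p+1) = (N+p+1) + 1 := by omega
    rw [this, Nat.choose_succ_succ (N+p+1) p, Nat.succ_eq_add_one]
    have : N+1+p = N+p+1 := by omega
    rw [this]; omega

open Finset in
lemma vdm : ∀ (q N p : ℕ), ∑ j ∈ range (N+1), (j+p).choose p * (N-j).choose q = (N+p+1).choose (p+q+1)
  | 0, N, p => by simpa using hockey p N
  | (q+1), 0, p => by
    simp [Nat.choose_eq_zero_of_lt (show 0 < q+1 by omega),
      Nat.choose_eq_zero_of_lt (show p+1 < p+(q+1)+1 by omega)]
  | (q+1), (N+1), p => by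
    rw [Finset.sum_range_succ]
    have h0 : (N+1-(N+1)).choose (q+1) = 0 := by
      simp [Nat.choose_eq_zero_of_lt (show 0 < q+1 by omega)]
    rw [h0, Nat.mul_zero, Nat.add_zero]
    have hsplit : ∀ j ∈ range (N+1),
        (j+p).choose p * (N+1-j).choose (q+1)
        = (j+p).choose p * (N-j).choose (q+1) + (j+p).choose p * (N-j).choose q := by
      intro j hj
      rw [Finset.mem_range] at hj
      rw [show N+1-j = (N-j)+1 by omega, Nat.choose_succ_succ, Nat.mul_add, Nat.succ_eq_add_one, Nat.add_comm ((j+p).choose p * (N-j).choose q) _]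
    rw [Finset.sum_congr rfl hsplit, Finset.sum_add_distrib, vdm (q+1) N p, vdm q N p]
    have : N+1+p+1 = (N+p+1)+1 := by omega
    rw [this, show p+(q+1)+1 = (p+q+1)+1 by omega, Nat.choose_succ_succ (N+p+1) (p+q+1), Nat.succ_eq_add_one]
    omega

open Finset in
lemma leibniz (r2 : ℕ) (x m : ℂ) : ∀ r1 : ℕ,
    ffac x r2 * ffac (x + m - r2) r1
      = ∑ k ∈ range (r1+1), (r1.choose k : ℂ) * ffac m k * ffac x (r1 + r2 - k)
  | 0 => by simp
  | (r1+1) => by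
    have IH := leibniz r2 x m r1
    have key : ffac x r2 * ffac (x + m - r2) (r1+1)
        = (∑ k ∈ range (r1+1), (r1.choose k : ℂ) * ffac m k * ffac x (r1 + r2 - k))
            * (x + m - r2 - r1) := by
      rw [ffac_succ, ← mul_assoc, IH]
    rw [key, Finset.sum_mul]
    have split : ∀ k ∈ range (r1+1),
        ((r1.choose k : ℂ) * ffac m k * ffac x (r1 + r2 - k)) * (x + m - r2 - r1)
        = (r1.choose k : ℂ) * ffac m k * ffac x ((r1 + r2 - k) + 1)
          + (r1.choose k : ℂ) * ffac m (k+1) * ffac x (r1 + r2 - k) := by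
      intro k hk
      rw [Finset.mem_range] at hk
      rw [ffac_succ x (r1+r2-k), ffac_succ m k]
      have hcast : ((r1 + r2 - k : ℕ) : ℂ) = (r1:ℂ) + r2 - k := by
        push_cast [Nat.cast_sub (show k ≤ r1 + r2 by omega)]; ring
      rw [hcast]; ring
    rw [Finset.sum_congr rfl split, Finset.sum_add_distrib]
    -- now handle RHS
    rw [Finset.sum_range_succ'
      (fun k => ((r1+1).choose k : ℂ) * ffac m k * ffac x (r1 + 1 + r2 - k)) (r1+1)]
    have congr2 : ∀ k ∈ range (r1+1),
        (((r1+1).choose (k+1) : ℂ)) * ffac m (k+1) * ffac x (r1 + 1 + r2 - (k+1))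
        = ((r1.choose k : ℂ)) * ffac m (k+1) * ffac x (r1 + r2 - k)
          + ((r1.choose (k+1) : ℂ)) * ffac m (k+1) * ffac x (r1 + r2 - k) := by
      intro k hk
      rw [show r1 + 1 + r2 - (k+1) = r1 + r2 - k by omega,
        Nat.choose_succ_succ r1 k]
      push_cast; ring
    rw [Finset.sum_congr rfl congr2, Finset.sum_add_distrib]
    -- first sum on LHS: peel off k = 0 and extend tail
    rw [Finset.sum_range_succ'
      (fun k => ((r1.choose k : ℂ)) * ffac m k * ffac x ((r1 + r2 - k) + 1)) r1]
    have congr3 : ∀ k ∈ range r1,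
        ((r1.choose (k+1) : ℂ)) * ffac m (k+1) * ffac x ((r1 + r2 - (k+1)) + 1)
        = ((r1.choose (k+1) : ℂ)) * ffac m (k+1) * ffac x (r1 + r2 - k) := by
      intro k hk
      rw [Finset.mem_range] at hk
      rw [show (r1 + r2 - (k+1)) + 1 = r1 + r2 - k by omega]
    rw [Finset.sum_congr rfl congr3]
    have ext : ∑ k ∈ range (r1+1), ((r1.choose (k+1) : ℂ)) * ffac m (k+1) * ffac x (r1 + r2 - k)
        = ∑ k ∈ range r1, ((r1.choose (k+1) : ℂ)) * ffac m (k+1) * ffac x (r1 + r2 - k) := by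
      rw [Finset.sum_range_succ, Nat.choose_succ_self r1]
      simp
    rw [ext]
    simp only [Nat.choose_zero_right, Nat.cast_one, ffac_zero,
      show r1 + r2 + 1 = r1 + 1 + r2 by omega, show r1 + r2 - 0 = r1 + r2 by omega,
      show r1 + 1 + r2 - 0 = r1 + 1 + r2 by omega]
    ring


section psi

def chi (n : ℤ) : ℂ := if 0 ≤ n then 1 else 0

def RR (a b : ℤ) (F : ℤ → ℂ) : ℂ := ∑ᶠ n : ℤ, (chi (n+a) - chi (n+b)) * F n

lemma weight_vanish {a b n : ℤ} (h : n ∉ Finset.Icc (-(|a|+|b|)) (|a|+|b|)) :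
    chi (n+a) - chi (n+b) = 0 := by
  simp only [Finset.mem_Icc, not_and_or, not_le] at h
  have h1 := neg_abs_le a; have h2 := le_abs_self a
  have h3 := neg_abs_le b; have h4 := le_abs_self b
  unfold chi
  rcases h with h | h
  · rw [if_neg (by omega), if_neg (by omega)]; ring
  · rw [if_pos (by omega), if_pos (by omega)]; ring

lemma RR_support (a b : ℤ) (F : ℤ → ℂ) :
    (Function.support fun n => (chi (n+a) - chi (n+b)) * F n)
      ⊆ (Finset.Icc (-(|a|+|b|)) (|a|+|b|) : Finset ℤ) := by
  intro n hn
  by_contra hc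
  refine hn ?_
  show (chi (n+a) - chi (n+b)) * F n = 0
  rw [weight_vanish (by simpa using hc), zero_mul]

lemma RR_fin (a b : ℤ) (F : ℤ → ℂ) :
    (Function.support fun n => (chi (n+a) - chi (n+b)) * F n).Finite :=
  Set.Finite.subset (Finset.finite_toSet _) (RR_support a b F)

lemma RR_shift (a b d : ℤ) (F : ℤ → ℂ) :
    RR a b F = RR (d+a) (d+b) (fun n => F (n+d)) := by
  unfold RR
  rw [← finsum_comp_equiv (Equiv.addRight d)
    (f := fun n => (chi (n+a) - chi (n+b)) * F n)]
  apply finsum_congr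
  intro n
  simp only [Equiv.coe_addRight]
  rw [add_assoc n d a, add_assoc n d b]

lemma RR_add (a b : ℤ) (F G : ℤ → ℂ) :
    RR a b (fun n => F n + G n) = RR a b F + RR a b G := by
  unfold RR
  rw [← finsum_add_distrib (RR_fin a b F) (RR_fin a b G)]
  apply finsum_congr; intro n; ring

lemma RR_neg (a b : ℤ) (F : ℤ → ℂ) :
    RR a b (fun n => - F n) = - RR a b F := by
  unfold RR
  rw [← finsum_neg_distrib]
  apply finsum_congr; intro n; ring

lemma RR_sub (a b : ℤ) (F G : ℤ → ℂ) :
    RR a b (fun n => F n - G n) = RR a b F - RR a b G := by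
  have : (fun n => F n - G n) = fun n => F n + (- G n) := by funext n; ring
  rw [this, RR_add, RR_neg]; ring

lemma RR_swap (a b : ℤ) (F : ℤ → ℂ) : RR a b F = - RR b a F := by
  rw [← RR_neg]
  apply finsum_congr; intro n; ring

lemma RR_smul (a b : ℤ) (c : ℂ) (F : ℤ → ℂ) :
    RR a b (fun n => c * F n) = c * RR a b F := by
  unfold RR
  have h1 : ∑ᶠ n : ℤ, (chi (n+a) - chi (n+b)) * (c * F n)
      = ∑ᶠ n : ℤ, c • ((chi (n+a) - chi (n+b)) * F n) :=
    finsum_congr (fun n => by simp [smul_eq_mul]; ring)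
  rw [h1, ← smul_finsum' c (RR_fin a b F), smul_eq_mul]

lemma RR_zero_fun (a b : ℤ) : RR a b (fun _ => (0:ℂ)) = 0 := by
  unfold RR; simp

lemma RR_cycle (a b c : ℤ) (F : ℤ → ℂ) : RR a b F + RR b c F + RR c a F = 0 := by
  unfold RR
  rw [← finsum_add_distrib (RR_fin a b F) (RR_fin b c F)]
  have hfin : (Function.support fun n =>
      (chi (n+a) - chi (n+b)) * F n + (chi (n+b) - chi (n+c)) * F n).Finite := by
    apply Set.Finite.subset ((RR_fin a b F).union (RR_fin b c F))
    exact Function.support_add _ _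
  rw [← finsum_add_distrib hfin (RR_fin c a F)]
  have : (fun n => ((chi (n+a) - chi (n+b)) * F n + (chi (n+b) - chi (n+c)) * F n)
      + (chi (n+c) - chi (n+a)) * F n) = fun _ => (0:ℂ) := by
    funext n; ring
  rw [this]; simp

def psi (M : ℤ) (f g : ℤ → ℂ) : ℂ := RR M 0 (fun n => f n * g (n+M))

end psi

lemma RR_congr (a b : ℤ) {F F' : ℤ → ℂ} (h : ∀ n, F n = F' n) : RR a b F = RR a b F' := by
  unfold RR; exact finsum_congr (fun n => by rw [h n])

lemma RR_shift_congr {a b d a' b' : ℤ} {F G : ℤ → ℂ} (ha : d + a = a') (hb : d + b = b')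
    (h : ∀ n, F (n + d) = G n) : RR a b F = RR a' b' G := by
  subst ha hb
  rw [RR_shift a b d F]
  exact RR_congr _ _ h

lemma psi_congr {M : ℤ} {f f' : ℤ → ℂ} (g : ℤ → ℂ) (h : ∀ n, f n = f' n) :
    psi M f g = psi M f' g :=
  RR_congr _ _ (fun n => by rw [h n])

lemma psi_add (M : ℤ) (f1 f2 g : ℤ → ℂ) :
    psi M (fun n => f1 n + f2 n) g = psi M f1 g + psi M f2 g := by
  unfold psi
  rw [← RR_add]
  exact RR_congr _ _ (fun n => by ring)

lemma psi_smul (M : ℤ) (c : ℂ) (f g : ℤ → ℂ) :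
    psi M (fun n => c * f n) g = c * psi M f g := by
  unfold psi
  rw [← RR_smul]
  exact RR_congr _ _ (fun n => by ring)

lemma psi_zero_fun (M : ℤ) (g : ℤ → ℂ) : psi M (fun _ => 0) g = 0 := by
  unfold psi
  have h := RR_congr M 0 (F := fun n => (fun _ => (0:ℂ)) n * g (n+M))
    (F' := fun _ => (0:ℂ)) (fun n => by ring)
  rw [h, RR_zero_fun]

lemma psi_antisym (M : ℤ) (f g : ℤ → ℂ) : psi (-M) g f = - psi M f g := by
  unfold psi
  rw [RR_swap]
  congr 1
  refine RR_shift_congr (d := M) (by ring) (by ring) (fun n => ?_)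
  ring_nf

lemma psi_finset_sum {ι : Type*} (s : Finset ι) (M : ℤ) (c : ι → ℂ) (f : ι → ℤ → ℂ)
    (g : ℤ → ℂ) :
    ∑ k ∈ s, c k * psi M (f k) g = psi M (fun n => ∑ k ∈ s, c k * f k n) g := by
  classical
  induction s using Finset.induction_on with
  | empty => simp [psi_zero_fun]
  | insert a s hx ih =>
    rw [Finset.sum_insert hx]
    have : (fun n => ∑ k ∈ insert a s, c k * f k n)
        = fun n => (c a * f a n) + ∑ k ∈ s, c k * f k n := by
      funext n; rw [Finset.sum_insert hx]
    rw [this, psi_add, psi_smul, ih]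

lemma psi_jacobi (u v w : ℤ) (huvw : u + v + w = 0) (f1 f2 f3 : ℤ → ℂ) :
    psi (u+v) (fun n => f1 (n+v) * f2 n - f2 (n+u) * f1 n) f3
  + psi (v+w) (fun n => f2 (n+w) * f3 n - f3 (n+v) * f2 n) f1
  + psi (w+u) (fun n => f3 (n+u) * f1 n - f1 (n+w) * f3 n) f2 = 0 := by
  obtain rfl : w = -u-v := by omega
  set P : ℤ → ℂ := fun n => f1 n * f2 (n+u) * f3 (n+u+v) with hP
  set Q : ℤ → ℂ := fun n => f2 n * f1 (n+v) * f3 (n+u+v) with hQ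
  have h1 : psi (u+v) (fun n => f1 (n+v) * f2 n - f2 (n+u) * f1 n) f3
      = RR (u+v) 0 Q - RR (u+v) 0 P := by
    unfold psi
    rw [← RR_sub]
    refine RR_congr _ _ (fun n => ?_)
    simp only [hP, hQ]
    ring_nf
  have h2 : psi (v+(-u-v)) (fun n => f2 (n+(-u-v)) * f3 n - f3 (n+v) * f2 n) f1
      = RR v (u+v) Q - RR 0 u P := by
    unfold psi
    have e1 : RR (v+(-u-v)) 0 (fun n => f2 (n+(-u-v)) * f3 n * f1 (n+(v+(-u-v))))
        = RR v (u+v) Q := by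
      refine RR_shift_congr (d := u+v) (by ring) (by ring) (fun n => ?_)
      simp only [hQ]
      ring_nf
    have e2 : RR (v+(-u-v)) 0 (fun n => f3 (n+v) * f2 n * f1 (n+(v+(-u-v))))
        = RR 0 u P := by
      refine RR_shift_congr (d := u) (by ring) (by ring) (fun n => ?_)
      simp only [hP]
      ring_nf
    rw [← e1, ← e2, ← RR_sub]
    refine RR_congr _ _ (fun n => by ring)
  have h3 : psi ((-u-v)+u) (fun n => f3 (n+u) * f1 n - f1 (n+(-u-v)) * f3 n) f2
      = RR 0 v Q - RR u (u+v) P := by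
    unfold psi
    have e1 : RR ((-u-v)+u) 0 (fun n => f3 (n+u) * f1 n * f2 (n+((-u-v)+u)))
        = RR 0 v Q := by
      refine RR_shift_congr (d := v) (by ring) (by ring) (fun n => ?_)
      simp only [hQ]
      ring_nf
    have e2 : RR ((-u-v)+u) 0 (fun n => f1 (n+(-u-v)) * f3 n * f2 (n+((-u-v)+u)))
        = RR u (u+v) P := by
      refine RR_shift_congr (d := u+v) (by ring) (by ring) (fun n => ?_)
      simp only [hP]
      ring_nf
    rw [← e1, ← e2, ← RR_sub]
    refine RR_congr _ _ (fun n => by ring)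
  have cQ := RR_cycle (u+v) 0 v Q
  have cP := RR_cycle (u+v) 0 u P
  linear_combination h1 + h2 + h3 + cQ - cP

def fr (r : ℕ) : ℤ → ℂ := fun n => ffac (n:ℂ) r

lemma psi_eval_nonneg (M : ℤ) (hM : 0 ≤ M) (f g : ℤ → ℂ) :
    psi M f g = ∑ n ∈ Finset.Icc (-M) (-1), f n * g (n+M) := by
  unfold psi RR
  rw [finsum_eq_sum_of_support_subset _ (s := Finset.Icc (-M) (-1)) ?_]
  · refine Finset.sum_congr rfl (fun n hn => ?_)
    rw [Finset.mem_Icc] at hn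
    unfold chi
    rw [if_pos (by omega), if_neg (by omega)]
    ring
  · intro n hn
    by_contra hc
    simp only [Finset.coe_Icc, Set.mem_Icc, not_and_or, not_le] at hc
    refine hn ?_
    show (chi (n+M) - chi (n+0)) * (f n * g (n+M)) = 0
    unfold chi
    rcases hc with h | h
    · rw [if_neg (by omega), if_neg (by omega)]; ring
    · rw [if_pos (by omega), if_pos (by omega)]; ring

lemma Icc_to_range (M : ℕ) (F : ℤ → ℂ) :
    ∑ n ∈ Finset.Icc (-(M:ℤ)) (-1), F n = ∑ j ∈ Finset.range M, F (-(j:ℤ)-1) := by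
  induction M with
  | zero => simp
  | succ M ih =>
    rw [Finset.sum_range_succ, ← ih]
    have hins : Finset.Icc (-((M+1:ℕ):ℤ)) (-1) = insert (-((M+1:ℕ):ℤ)) (Finset.Icc (-(M:ℤ)) (-1)) := by
      ext n
      simp only [Finset.mem_Icc, Finset.mem_insert]
      omega
    rw [hins, Finset.sum_insert (by simp only [Finset.mem_Icc]; omega)]
    rw [show -((M+1:ℕ):ℤ) = -(M:ℤ)-1 by push_cast; ring]
    ring

lemma ffac_int_nonneg (n : ℤ) (h : 0 ≤ n) (r : ℕ) :
    ffac (n:ℂ) r = (r.factorial : ℂ) * (n.toNat.choose r) := by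
  have : ((n.toNat : ℕ) : ℂ) = (n : ℂ) := by
    rw [show ((n.toNat : ℕ) : ℂ) = ((n.toNat : ℤ) : ℂ) by push_cast; ring,
      Int.toNat_of_nonneg h]
  rw [← this, ffac_nat]

/-- the key evaluation: for `M ≥ 0`,
`ψ(M, ⟨·⟩r1, ⟨·⟩r2) = (-1)^{r1} r1! r2! C(M+r1, r1+r2+1)` -/
lemma psi_eval (M : ℤ) (hM : 0 ≤ M) (r1 r2 : ℕ) :
    psi M (fr r1) (fr r2)
      = (-1)^r1 * (r1.factorial : ℂ) * (r2.factorial : ℂ)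
          * ((M.toNat + r1).choose (r1+r2+1)) := by
  rw [psi_eval_nonneg M hM, show M = (M.toNat : ℤ) by omega, Icc_to_range]
  have hterm : ∀ j ∈ Finset.range M.toNat,
      fr r1 (-(j:ℤ)-1) * fr r2 ((-(j:ℤ)-1) + (M.toNat:ℤ))
      = ((-1)^r1 * (r1.factorial : ℂ) * (r2.factorial : ℂ))
          * (((j+r1).choose r1 : ℂ) * ((M.toNat - 1 - j).choose r2 : ℂ)) := by
    intro j hj
    rw [Finset.mem_range] at hj
    unfold fr
    have c1 : ((-(j:ℤ)-1 : ℤ) : ℂ) = -((j:ℂ)+1) := by push_cast; ring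
    rw [c1, ffac_neg_nat j r1]
    have h2 : (0:ℤ) ≤ (-(j:ℤ)-1) + (M.toNat:ℤ) := by omega
    rw [ffac_int_nonneg _ h2 r2]
    have h3 : ((-(j:ℤ)-1) + (M.toNat:ℤ)).toNat = M.toNat - 1 - j := by omega
    rw [h3]
    ring
  rw [Finset.sum_congr rfl hterm, ← Finset.mul_sum]
  rcases Nat.eq_zero_or_pos M.toNat with h0 | hpos
  · rw [h0]
    simp only [Finset.range_zero, Finset.sum_empty, Nat.zero_add]
    rw [Nat.choose_eq_zero_of_lt (by omega)]
    simp
  · obtain ⟨N, hN⟩ : ∃ N, M.toNat = N + 1 := ⟨M.toNat - 1, by omega⟩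
    rw [hN]
    have : ∀ j ∈ Finset.range (N+1),
        (((j+r1).choose r1 : ℂ) * ((N + 1 - 1 - j).choose r2 : ℂ))
        = (((j+r1).choose r1 * (N-j).choose r2 : ℕ) : ℂ) := by
      intro j hj
      rw [show N + 1 - 1 - j = N - j by omega]
      push_cast; ring
    rw [Finset.sum_congr rfl this, ← Nat.cast_sum, vdm r2 N r1]
    rw [Int.toNat_natCast, show N + 1 + r1 = N + r1 + 1 by omega]

lemma factorial_ne_zero' (k : ℕ) : ((k.factorial : ℂ)) ≠ 0 :=
  Nat.cast_ne_zero.2 (Nat.factorial_ne_zero k)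

lemma cocycleVal_antisym (m1 : ℤ) (r1 : ℕ) (m2 : ℤ) (r2 : ℕ) :
    cocycleVal m2 r2 m1 r1 = - cocycleVal m1 r1 m2 r2 := by
  unfold cocycleVal binomC
  by_cases h : (r1:ℤ) + r2 = m1 + m2
  · rw [if_pos (by omega), if_pos h]
    have hm : ((r1 + r2 + 1 : ℕ) : ℂ) - 1 - (m1:ℂ) = (m2:ℂ) := by
      have : (m2:ℤ) = r1 + r2 - m1 := by omega
      rw [this]; push_cast; ring
    rw [show r2 + r1 + 1 = r1 + r2 + 1 by omega, ← hm, ffac_reflect]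
    have h1 : ((-1:ℂ))^(r1+r2+1) = (-1)^r1 * (-1)^r2 * (-1) := by
      rw [pow_add, pow_add, pow_one]
    have h2 : (-1:ℂ)^r2 * (-1)^r2 = 1 := by rw [← mul_pow]; norm_num
    rw [h1]
    field_simp
    ring_nf
    rw [show ((-1:ℂ))^(r2*2) = 1 from Even.neg_one_pow ⟨r2, by ring⟩]
    ring
  · rw [if_neg (by omega), if_neg h]; ring

lemma K1pos (m1 : ℤ) (r1 : ℕ) (m2 : ℤ) (r2 : ℕ) (hM : 0 ≤ m1 - (r1:ℤ))
    (hd : (r1:ℤ) + r2 = m1 + m2) :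
    cocycleVal m1 r1 m2 r2 = psi (m1 - r1) (fr r1) (fr r2) := by
  rw [psi_eval _ hM]
  unfold cocycleVal binomC
  rw [if_pos hd]
  have h0 : (0:ℤ) ≤ m1 := by omega
  rw [ffac_int_nonneg m1 h0]
  rw [show m1.toNat = (m1 - r1).toNat + r1 by omega,
    mul_div_cancel_left₀ _ (factorial_ne_zero' (r1+r2+1)),
    show (m1 - (r1:ℤ)).toNat + r1 = r1 + (m1.toNat - r1) by omega]
  ring

lemma K1 (m1 : ℤ) (r1 : ℕ) (m2 : ℤ) (r2 : ℕ) :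
    cocycleVal m1 r1 m2 r2
      = if (m1 - r1) + (m2 - r2) = 0 then psi (m1 - r1) (fr r1) (fr r2) else 0 := by
  by_cases hd : (r1:ℤ) + r2 = m1 + m2
  · rw [if_pos (by omega)]
    rcases le_or_gt 0 (m1 - (r1:ℤ)) with hM | hM
    · exact K1pos m1 r1 m2 r2 hM hd
    · have h2 : 0 ≤ m2 - (r2:ℤ) := by omega
      have hK := K1pos m2 r2 m1 r1 h2 (by omega)
      have h' := cocycleVal_antisym m1 r1 m2 r2
      calc cocycleVal m1 r1 m2 r2 = - cocycleVal m2 r2 m1 r1 := by rw [h', neg_neg]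
        _ = - psi (m2 - r2) (fr r2) (fr r1) := by rw [hK]
        _ = psi (-(m2 - (r2:ℤ))) (fr r1) (fr r2) := (psi_antisym (m2 - r2) (fr r2) (fr r1)).symm
        _ = psi (m1 - r1) (fr r1) (fr r2) := by rw [show -(m2 - (r2:ℤ)) = m1 - r1 by omega]
  · rw [if_neg (by omega)]
    unfold cocycleVal
    rw [if_neg hd]
    ring

lemma D_single (n : ℤ) (a : ℂ) :
    D (AddMonoidAlgebra.single n a) = AddMonoidAlgebra.single (n-1) ((n:ℂ) * a) := by
  unfold D
  change (AddMonoidAlgebra.ofCoeff (Finsupp.lsum ℂ (fun n : ℤ => ((n : ℂ) • Finsupp.lsingle (n - 1) : ℂ →ₗ[ℂ] (ℤ →₀ ℂ))) (Finsupp.single n a)) : Lau) = _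
  rw [Finsupp.lsum_single]
  show AddMonoidAlgebra.ofCoeff ((n:ℂ) • (Finsupp.lsingle (n-1) : ℂ →ₗ[ℂ] (ℤ →₀ ℂ)) a) = _
  rw [Finsupp.lsingle_apply, Finsupp.smul_single, smul_eq_mul]
  rfl

lemma Dpow_single (n : ℤ) (a : ℂ) : ∀ r : ℕ,
    (D ^ r) (AddMonoidAlgebra.single n a) = AddMonoidAlgebra.single (n - r) (ffac (n:ℂ) r * a)
  | 0 => by simp
  | (r+1) => by
    rw [pow_succ, Module.End.mul_apply, D_single, Dpow_single (n-1) ((n:ℂ)*a) r]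
    have he : n - 1 - (r:ℤ) = n - ((r:ℕ)+1:ℕ) := by push_cast; ring
    rw [he]
    congr 1
    rw [ffac_succ]
    have hc : (((n-1:ℤ)):ℂ) = (n:ℂ) - 1 := by push_cast; ring
    rw [hc]
    linear_combination a * ffac_shift (n:ℂ) r

lemma shiftOp_single (m n : ℤ) (a : ℂ) :
    shiftOp m (AddMonoidAlgebra.single n a) = AddMonoidAlgebra.single (m + n) a := by
  unfold shiftOp
  rw [LinearMap.mulLeft_apply]
  show LaurentPolynomial.T m * _ = _
  rw [LaurentPolynomial.T]
  exact (AddMonoidAlgebra.single_mul_single ..).trans (by rw [one_mul])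

lemma T_single (m : ℤ) (r : ℕ) (n : ℤ) (a : ℂ) :
    T m r (AddMonoidAlgebra.single n a) = AddMonoidAlgebra.single (m + (n - r)) (ffac (n:ℂ) r * a) := by
  unfold T
  rw [Module.End.mul_apply, Dpow_single, shiftOp_single]

open Finset in
lemma prod_T (m1 : ℤ) (r1 : ℕ) (m2 : ℤ) (r2 : ℕ) :
    T m1 r1 * T m2 r2
      = ∑ k ∈ range (r1+1),
          ((r1.choose k : ℂ) * ffac (m2:ℂ) k) • T (m1+m2-k) (r1+r2-k) := by
  refine LinearMap.ext (fun p => ?_)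
  induction p using AddMonoidAlgebra.induction_linear with
  | zero => simp
  | add f g hf hg => simp only [map_add, hf, hg]
  | single n a =>
  simp only [Module.End.mul_apply, LinearMap.sum_apply, T_single]
  have hterm : ∀ k ∈ range (r1+1),
      (((r1.choose k : ℂ) * ffac (m2:ℂ) k) • T (m1+m2-k) (r1+r2-k)) (AddMonoidAlgebra.single n a)
      = AddMonoidAlgebra.single (m1 + (m2 + (n - r2) - r1))
          (((r1.choose k : ℂ) * ffac (m2:ℂ) k * ffac (n:ℂ) (r1+r2-k)) * a) := by
    intro k hk
    rw [Finset.mem_range] at hk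
    rw [LinearMap.smul_apply, T_single, AddMonoidAlgebra.smul_single, smul_eq_mul]
    congr 1
    · push_cast [Nat.cast_sub (show k ≤ r1 + r2 by omega)]
      ring
    · ring
  have hsingle : ∀ k : ℂ, AddMonoidAlgebra.single (m1 + (m2 + (n - r2) - r1)) k
      = (AddMonoidAlgebra.singleAddHom (m1 + (m2 + (n - (r2:ℤ)) - r1)) : ℂ →+ Lau) k :=
    fun k => rfl
  rw [Finset.sum_congr rfl hterm]
  simp only [hsingle]
  rw [← map_sum (AddMonoidAlgebra.singleAddHom (m1 + (m2 + (n - (r2:ℤ)) - r1)) : ℂ →+ Lau)]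
  congr 1
  rw [← Finset.sum_mul]
  have hc : (((m2 + (n - (r2:ℤ))):ℤ):ℂ) = (n:ℂ) + (m2:ℂ) - (r2:ℂ) := by push_cast; ring
  rw [hc]
  linear_combination a * (leibniz r2 (n:ℂ) (m2:ℂ) r1)

lemma psi_sub (M : ℤ) (f1 f2 g : ℤ → ℂ) :
    psi M (fun n => f1 n - f2 n) g = psi M f1 g - psi M f2 g := by
  unfold psi
  rw [← RR_sub]
  exact RR_congr _ _ (fun n => by ring)

open Finset in
lemma c_bracket (c : Module.End ℂ Lau →ₗ[ℂ] Module.End ℂ Lau →ₗ[ℂ] ℂ)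
    (hc : ∀ (m1 : ℤ) (r1 : ℕ) (m2 : ℤ) (r2 : ℕ),
      c (T m1 r1) (T m2 r2) = cocycleVal m1 r1 m2 r2)
    (ma : ℤ) (ra : ℕ) (mb : ℤ) (rb : ℕ) (mc : ℤ) (rc : ℕ) :
    c ⁅T ma ra, T mb rb⁆ (T mc rc)
    = if (ma - ra) + (mb - rb) + (mc - rc) = 0
      then psi ((ma - ra) + (mb - rb))
        (fun n => fr ra (n + (mb - rb)) * fr rb n - fr rb (n + (ma - ra)) * fr ra n)
        (fr rc)
      else 0 := by
  rw [Ring.lie_def, map_sub, prod_T ma ra mb rb, prod_T mb rb ma ra, map_sum, map_sum]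
  simp only [map_smul, LinearMap.sub_apply, LinearMap.sum_apply, LinearMap.smul_apply,
    smul_eq_mul, hc]
  by_cases hD : (ma - (ra:ℤ)) + (mb - rb) + (mc - rc) = 0
  · rw [if_pos hD]
    have h1 : ∀ k ∈ range (ra+1),
        (↑(ra.choose k) * ffac (mb:ℂ) k) * cocycleVal (ma+mb-k) (ra+rb-k) mc rc
        = (↑(ra.choose k) * ffac (mb:ℂ) k)
            * psi ((ma - ra) + (mb - rb)) (fr (ra+rb-k)) (fr rc) := by
      intro k hk
      rw [Finset.mem_range] at hk
      rw [K1]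
      have hcast : ((ra + rb - k : ℕ) : ℤ) = (ra:ℤ) + rb - k := by omega
      rw [hcast, if_pos (by omega), show ma + mb - (k:ℤ) - ((ra:ℤ) + rb - k)
        = (ma - ra) + (mb - rb) by ring]
    have h2 : ∀ k ∈ range (rb+1),
        (↑(rb.choose k) * ffac (ma:ℂ) k) * cocycleVal (mb+ma-k) (rb+ra-k) mc rc
        = (↑(rb.choose k) * ffac (ma:ℂ) k)
            * psi ((ma - ra) + (mb - rb)) (fr (rb+ra-k)) (fr rc) := by
      intro k hk
      rw [Finset.mem_range] at hk
      rw [K1]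
      have hcast : ((rb + ra - k : ℕ) : ℤ) = (rb:ℤ) + ra - k := by omega
      rw [hcast, if_pos (by omega), show mb + ma - (k:ℤ) - ((rb:ℤ) + ra - k)
        = (ma - ra) + (mb - rb) by ring]
    rw [Finset.sum_congr rfl h1, Finset.sum_congr rfl h2,
      psi_finset_sum, psi_finset_sum, ← psi_sub]
    refine psi_congr _ (fun n => ?_)
    have e1 : ∑ k ∈ range (ra+1), (↑(ra.choose k) * ffac (mb:ℂ) k) * fr (ra+rb-k) n
        = fr ra (n + (mb - rb)) * fr rb n := by
      have hl := leibniz rb (n:ℂ) (mb:ℂ) ra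
      have hcast : (((n + (mb - (rb:ℤ))):ℤ):ℂ) = (n:ℂ) + (mb:ℂ) - (rb:ℂ) := by
        push_cast; ring
      unfold fr
      rw [hcast, ← hl]
      ring
    have e2 : ∑ k ∈ range (rb+1), (↑(rb.choose k) * ffac (ma:ℂ) k) * fr (rb+ra-k) n
        = fr rb (n + (ma - ra)) * fr ra n := by
      have hl := leibniz ra (n:ℂ) (ma:ℂ) rb
      have hcast : (((n + (ma - (ra:ℤ))):ℤ):ℂ) = (n:ℂ) + (ma:ℂ) - (ra:ℂ) := by
        push_cast; ring
      unfold fr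
      rw [hcast, ← hl]
      ring
    rw [e1, e2]
  · rw [if_neg hD]
    have h1 : ∀ k ∈ range (ra+1),
        (↑(ra.choose k) * ffac (mb:ℂ) k) * cocycleVal (ma+mb-k) (ra+rb-k) mc rc = 0 := by
      intro k hk
      rw [Finset.mem_range] at hk
      rw [K1]
      have hcast : ((ra + rb - k : ℕ) : ℤ) = (ra:ℤ) + rb - k := by omega
      rw [hcast, if_neg (by omega), mul_zero]
    have h2 : ∀ k ∈ range (rb+1),
        (↑(rb.choose k) * ffac (ma:ℂ) k) * cocycleVal (mb+ma-k) (rb+ra-k) mc rc = 0 := by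
      intro k hk
      rw [Finset.mem_range] at hk
      rw [K1]
      have hcast : ((rb + ra - k : ℕ) : ℤ) = (rb:ℤ) + ra - k := by omega
      rw [hcast, if_neg (by omega), mul_zero]
    rw [Finset.sum_congr rfl h1, Finset.sum_congr rfl h2]
    simp


/-- The centrally extended vector space `Â = A ⊕ ℂκ` with bracket
`[a + λκ, b + μκ] = ab - ba + c(a,b)κ` is a Lie algebra; in particular `A` is closed
under the commutator and `c` is a 2-cocycle: `c(a,b) = -c(b,a)` and
`c([a,b],d) + c([b,d],a) + c([d,a],b) = 0` for all `a, b, d ∈ A`. -/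
theorem w1plusInfty_cocycle
    (c : Module.End ℂ Lau →ₗ[ℂ] Module.End ℂ Lau →ₗ[ℂ] ℂ)
    (hc : ∀ (m1 : ℤ) (r1 : ℕ) (m2 : ℤ) (r2 : ℕ),
      c (T m1 r1) (T m2 r2) = cocycleVal m1 r1 m2 r2) :
    (∀ a ∈ Walg, ∀ b ∈ Walg, ⁅a, b⁆ ∈ Walg) ∧
    (∀ a ∈ Walg, ∀ b ∈ Walg, c a b = - c b a) ∧
    (∀ a ∈ Walg, ∀ b ∈ Walg, ∀ d ∈ Walg,
      c ⁅a, b⁆ d + c ⁅b, d⁆ a + c ⁅d, a⁆ b = 0) := by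
  letI : LieRing (Module.End ℂ Lau) := LieRing.ofAssociativeRing
  letI : LieAlgebra ℂ (Module.End ℂ Lau) := LieAlgebra.ofAssociativeAlgebra
  have gen_mem : ∀ (m : ℤ) (r : ℕ), T m r ∈ Walg :=
    fun m r => Submodule.subset_span ⟨m, r, rfl⟩
  refine ⟨?goal1, ?goal2, ?goal3⟩
  case goal1 =>
    intro a ha
    refine Submodule.span_induction (p := fun x _ => ∀ b ∈ Walg, ⁅x, b⁆ ∈ Walg)
      ?_ ?_ ?_ ?_ ha
    · rintro x ⟨m1, r1, rfl⟩ b hb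
      refine Submodule.span_induction (p := fun y _ => ⁅T m1 r1, y⁆ ∈ Walg)
        ?_ ?_ ?_ ?_ hb
      · rintro y ⟨m2, r2, rfl⟩
        rw [Ring.lie_def, prod_T, prod_T]
        exact sub_mem
          (Submodule.sum_mem _ fun k _ => Submodule.smul_mem _ _ (gen_mem _ _))
          (Submodule.sum_mem _ fun k _ => Submodule.smul_mem _ _ (gen_mem _ _))
      · show ⁅T m1 r1, (0:Module.End ℂ Lau)⁆ ∈ Walg
        rw [lie_zero]; exact Walg.zero_mem
      · intro y z hy hz hpy hpz; rw [lie_add]; exact add_mem hpy hpz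
      · intro t y hy hpy; rw [lie_smul]; exact Submodule.smul_mem _ _ hpy
    · intro b hb
      show ⁅(0:Module.End ℂ Lau), b⁆ ∈ Walg
      rw [zero_lie]; exact Walg.zero_mem
    · intro x y hx hy hpx hpy b hb; rw [add_lie]; exact add_mem (hpx b hb) (hpy b hb)
    · intro t x hx hpx b hb; rw [smul_lie]; exact Submodule.smul_mem _ _ (hpx b hb)
  case goal2 =>
    intro a ha
    refine Submodule.span_induction (p := fun x _ => ∀ b ∈ Walg, c x b = - c b x)
      ?_ ?_ ?_ ?_ ha
    · rintro x ⟨m1, r1, rfl⟩ b hb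
      refine Submodule.span_induction (p := fun y _ => c (T m1 r1) y = - c y (T m1 r1))
        ?_ ?_ ?_ ?_ hb
      · rintro y ⟨m2, r2, rfl⟩
        rw [hc, hc, cocycleVal_antisym]
      · simp
      · intro y z hy hz hpy hpz
        simp only [map_add, LinearMap.add_apply, hpy, hpz]; ring
      · intro t y hy hpy
        simp only [map_smul, LinearMap.smul_apply, smul_eq_mul, hpy]; ring
    · intro b hb; simp
    · intro x y hx hy hpx hpy b hb
      simp only [map_add, LinearMap.add_apply, hpx b hb, hpy b hb]; ring
    · intro t x hx hpx b hb
      simp only [map_smul, LinearMap.smul_apply, smul_eq_mul, hpx b hb]; ring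
  case goal3 =>
    intro a ha
    refine Submodule.span_induction
      (p := fun x _ => ∀ b ∈ Walg, ∀ d ∈ Walg,
        c ⁅x, b⁆ d + c ⁅b, d⁆ x + c ⁅d, x⁆ b = 0) ?_ ?_ ?_ ?_ ha
    · rintro x ⟨m1, r1, rfl⟩ b hb
      refine Submodule.span_induction
        (p := fun y _ => ∀ d ∈ Walg,
          c ⁅T m1 r1, y⁆ d + c ⁅y, d⁆ (T m1 r1) + c ⁅d, T m1 r1⁆ y = 0) ?_ ?_ ?_ ?_ hb
      · rintro y ⟨m2, r2, rfl⟩ d hd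
        refine Submodule.span_induction
          (p := fun z _ =>
            c ⁅T m1 r1, T m2 r2⁆ z + c ⁅T m2 r2, z⁆ (T m1 r1)
              + c ⁅z, T m1 r1⁆ (T m2 r2) = 0) ?_ ?_ ?_ ?_ hd
        · rintro z ⟨m3, r3, rfl⟩
          rw [c_bracket c hc m1 r1 m2 r2 m3 r3, c_bracket c hc m2 r2 m3 r3 m1 r1,
            c_bracket c hc m3 r3 m1 r1 m2 r2]
          by_cases hD : (m1 - (r1:ℤ)) + (m2 - r2) + (m3 - r3) = 0
          · rw [if_pos hD, if_pos (by omega), if_pos (by omega)]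
            exact psi_jacobi (m1 - r1) (m2 - r2) (m3 - r3) hD (fr r1) (fr r2) (fr r3)
          · rw [if_neg hD, if_neg (by omega), if_neg (by omega)]; ring
        · simp
        · intro y' z' hy' hz' hpy hpz
          simp only [lie_add, add_lie, map_add, LinearMap.add_apply] at hpy hpz ⊢
          linear_combination hpy + hpz
        · intro t y' hy' hpy
          simp only [lie_smul, smul_lie, map_smul, LinearMap.smul_apply, smul_eq_mul]
            at hpy ⊢
          linear_combination t * hpy
      · intro d hd; simp
      · intro y' z' hy' hz' hpy hpz d hd
        have h1 := hpy d hd; have h2 := hpz d hd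
        simp only [lie_add, add_lie, map_add, LinearMap.add_apply] at h1 h2 ⊢
        linear_combination h1 + h2
      · intro t y' hy' hpy d hd
        have h1 := hpy d hd
        simp only [lie_smul, smul_lie, map_smul, LinearMap.smul_apply, smul_eq_mul]
          at h1 ⊢
        linear_combination t * h1
    · intro b hb d hd; simp
    · intro x y hx hy hpx hpy b hb d hd
      have h1 := hpx b hb d hd; have h2 := hpy b hb d hd
      simp only [lie_add, add_lie, map_add, LinearMap.add_apply] at h1 h2 ⊢
      linear_combination h1 + h2
    · intro t x hx hpx b hb d hd
      have h1 := hpx b hb d hd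
      simp only [lie_smul, smul_lie, map_smul, LinearMap.smul_apply, smul_eq_mul]
        at h1 ⊢
      linear_combination t * h1
end
end

section
/- Let n be a positive integer. The associative algebra M_n(ℂ) ⊗ gl(∞) is isomorphic to gl(∞), where gl(∞) denotes the algebra of matrices indexed by ℤ+1/2 with finitely many nonzero entries (product E_{l1,l2}·E_{k1,k2} = δ_{l2+k1,0} E_{l1,k2}). Explicitly, the linear map sending E_{i,j} ⊗ E_{l+1/2, k-1/2} to E_{ln+i-1/2, kn-j+1/2} for i,j ∈ {1,...,n} and l,k ∈ ℤ is an isomorphism of associative algebras. -/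
noncomputable section

open scoped TensorProduct

/-- The index set `ℤ + 1/2` of half-integers. -/
abbrev HI : Type := {q : ℚ // ∃ n : ℤ, q = (n : ℚ) + 1/2}

/-- The half-integer `n + 1/2`. -/
def hf (n : ℤ) : HI := ⟨(n : ℚ) + 1/2, ⟨n, rfl⟩⟩

/-- `gl(∞)`: matrices indexed by half-integers with finitely many nonzero entries. -/
abbrev glM : Type := (HI × HI) →₀ ℂ

/-- The elementary matrix `E_{a,b}` of `gl(∞)`. -/
def EE (a b : HI) : glM := Finsupp.single (a, b) 1

/-- The product of `gl(∞)`: `E_{l1,l2} · E_{k1,k2} = δ_{l2+k1,0} E_{l1,k2}`. -/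
def glMul (x y : glM) : glM :=
  x.sum fun p c => y.sum fun r e =>
    if (p.2).1 + (r.1).1 = 0 then Finsupp.single (p.1, r.2) (c * e) else 0

/-! ### Auxiliary development -/

/-- The integer part of a half-integer. -/
def hiToZ (a : HI) : ℤ := a.2.choose

lemma hf_toZ (a : HI) : hf (hiToZ a) = a := Subtype.ext a.2.choose_spec.symm

lemma hf_injective : Function.Injective hf := by
  intro m m' h
  have : (m : ℚ) + 1/2 = (m' : ℚ) + 1/2 := congrArg Subtype.val h
  exact_mod_cast add_right_cancel this

lemma toZ_hf (m : ℤ) : hiToZ (hf m) = m := hf_injective (hf_toZ (hf m))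

/-- `ℤ ≃ HI`. -/
def eZ : ℤ ≃ HI := ⟨hf, hiToZ, toZ_hf, hf_toZ⟩

lemma hf_val (m : ℤ) : (hf m).1 = (m : ℚ) + 1/2 := rfl

/-- Division with remainder: `Fin n × ℤ ≃ ℤ`, `(i, l) ↦ l*n + i`. -/
def dEquiv (n : ℕ) (hn : 0 < n) : (Fin n × ℤ) ≃ ℤ where
  toFun p := p.2 * n + (p.1 : ℤ)
  invFun m :=
    (⟨(m % (n : ℤ)).toNat, by
      have h1 : 0 ≤ m % (n : ℤ) := Int.emod_nonneg m (by exact_mod_cast hn.ne')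
      have h2 : m % (n : ℤ) < n := Int.emod_lt_of_pos m (by exact_mod_cast hn)
      omega⟩, m / (n : ℤ))
  left_inv := by
    rintro ⟨i, l⟩
    have hi0 : (0 : ℤ) ≤ (i : ℤ) := Int.ofNat_nonneg _
    have hin : (i : ℤ) < (n : ℤ) := by exact_mod_cast i.2
    have hmod : (l * (n : ℤ) + (i : ℤ)) % (n : ℤ) = (i : ℤ) := by
      rw [add_comm, mul_comm, Int.add_mul_emod_self_left]
      exact Int.emod_eq_of_lt hi0 hin
    have hdiv : (l * (n : ℤ) + (i : ℤ)) / (n : ℤ) = l := by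
      rw [add_comm, mul_comm, Int.add_mul_ediv_left _ _ (by exact_mod_cast hn.ne' : (n : ℤ) ≠ 0),
        Int.ediv_eq_zero_of_lt hi0 hin, zero_add]
    ext
    · simp [hmod]
    · simp [hdiv]
  right_inv := by
    intro m
    have h1 : 0 ≤ m % (n : ℤ) := Int.emod_nonneg m (by exact_mod_cast hn.ne')
    have h2 := Int.mul_ediv_add_emod m (n : ℤ)
    simp only []
    rw [Int.toNat_of_nonneg h1]
    linarith [h2]

/-- `(i, a) ↦` the half-integer `hiToZ a * n + i + 1/2`. -/
def e₁ (n : ℕ) (hn : 0 < n) : (Fin n × HI) ≃ HI :=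
  ((Equiv.refl (Fin n)).prodCongr eZ.symm).trans ((dEquiv n hn).trans eZ)

/-- `(j, b) ↦` the half-integer `(hiToZ b + 1) * n - j - 1 + 1/2`. -/
def e₂ (n : ℕ) (hn : 0 < n) : (Fin n × HI) ≃ HI :=
  ((Fin.revPerm).prodCongr eZ.symm).trans ((dEquiv n hn).trans eZ)

lemma e₁_apply (n : ℕ) (hn : 0 < n) (i : Fin n) (a : HI) :
    e₁ n hn (i, a) = hf (hiToZ a * n + (i : ℕ)) := rfl

lemma e₂_apply (n : ℕ) (hn : 0 < n) (j : Fin n) (b : HI) :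
    e₂ n hn (j, b) = hf (hiToZ b * n + ((n : ℤ) - (j : ℕ) - 1)) := by
  have hj : ((Fin.rev j : Fin n) : ℕ) = n - ((j : ℕ) + 1) := Fin.val_rev j
  have hj2 : (((Fin.rev j : Fin n) : ℕ) : ℤ) = (n : ℤ) - (j : ℕ) - 1 := by
    have := j.2; omega
  show hf (hiToZ b * n + ((Fin.rev j : Fin n) : ℕ)) = _
  rw [hj2]

/-- Values of `e₁`, `e₂` as rationals. -/
lemma e₁_val (n : ℕ) (hn : 0 < n) (i : Fin n) (a : HI) :
    (e₁ n hn (i, a)).1 = ((hiToZ a * n + (i : ℕ) : ℤ) : ℚ) + 1/2 := by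
  rw [e₁_apply]; rfl

lemma e₂_val (n : ℕ) (hn : 0 < n) (j : Fin n) (b : HI) :
    (e₂ n hn (j, b)).1 = ((hiToZ b * n + ((n : ℤ) - (j : ℕ) - 1) : ℤ) : ℚ) + 1/2 := by
  rw [e₂_apply]; rfl

/-- The key arithmetic equivalence for multiplicativity. -/
lemma cond_iff (n : ℕ) (hn : 0 < n) (j i' : Fin n) (b c : HI) :
    ((e₂ n hn (j, b)).1 + (e₁ n hn (i', c)).1 = 0) ↔ (b.1 + c.1 = 0 ∧ j = i') := by
  obtain ⟨kb, rfl⟩ : ∃ m, b = hf m := ⟨hiToZ b, (hf_toZ b).symm⟩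
  obtain ⟨lc, rfl⟩ : ∃ m, c = hf m := ⟨hiToZ c, (hf_toZ c).symm⟩
  have hb : (hf kb).1 = (kb : ℚ) + 1/2 := rfl
  have hc : (hf lc).1 = (lc : ℚ) + 1/2 := rfl
  rw [e₂_val, e₁_val, hb, hc, toZ_hf, toZ_hf]
  have hsum : ((kb * n + ((n : ℤ) - (j : ℕ) - 1) : ℤ) : ℚ) + 1/2
      + (((lc * n + (i' : ℕ) : ℤ) : ℚ) + 1/2)
      = (((kb + lc + 1) * n + ((i' : ℕ) : ℤ) - ((j : ℕ) : ℤ) : ℤ) : ℚ) := by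
    push_cast; ring
  rw [hsum]
  have hbc : ((kb : ℚ) + 1/2 + ((lc : ℚ) + 1/2) = 0) ↔ (kb + lc + 1 = 0) := by
    constructor
    · intro h
      have : ((kb + lc + 1 : ℤ) : ℚ) = 0 := by push_cast; linarith
      exact_mod_cast this
    · intro h
      have : ((kb + lc + 1 : ℤ) : ℚ) = 0 := by exact_mod_cast h
      push_cast at this; linarith
  rw [hbc]
  rw [show (((kb + lc + 1) * n + ((i' : ℕ) : ℤ) - ((j : ℕ) : ℤ) : ℤ) : ℚ) = 0
      ↔ ((kb + lc + 1) * n + ((i' : ℕ) : ℤ) - ((j : ℕ) : ℤ) : ℤ) = 0 from by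
    exact_mod_cast Int.cast_eq_zero]
  constructor
  · intro h
    set t := kb + lc + 1 with ht
    have hi' : ((i' : ℕ) : ℤ) < n := by exact_mod_cast i'.2
    have hj : ((j : ℕ) : ℤ) < n := by exact_mod_cast j.2
    have hi0 : (0 : ℤ) ≤ ((i' : ℕ) : ℤ) := Int.ofNat_nonneg _
    have hj0 : (0 : ℤ) ≤ ((j : ℕ) : ℤ) := Int.ofNat_nonneg _
    have hn' : (0 : ℤ) < n := by exact_mod_cast hn
    have ht0 : t = 0 := by
      rcases lt_trichotomy t 0 with h1 | h1 | h1
      · have : t * n ≤ -1 * n := mul_le_mul_of_nonneg_right (by omega) (le_of_lt hn')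
        omega
      · exact h1
      · have : 1 * n ≤ t * n := mul_le_mul_of_nonneg_right (by omega) (le_of_lt hn')
        omega
    refine ⟨ht0, ?_⟩
    rw [ht0] at h
    have : ((i' : ℕ) : ℤ) = ((j : ℕ) : ℤ) := by omega
    have : (i' : ℕ) = (j : ℕ) := by exact_mod_cast this
    exact (Fin.ext this).symm
  · rintro ⟨h1, h2⟩
    subst h2
    rw [h1]
    ring

/-- The product of elementary matrices in `gl(∞)`. -/
lemma glMul_EE (a b c d : HI) :
    glMul (EE a b) (EE c d) = if b.1 + c.1 = 0 then EE a d else 0 := by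
  unfold glMul EE
  rw [Finsupp.sum_single_index, Finsupp.sum_single_index]
  · simp
  · split <;> simp
  · simp

/-- `glMul` as a bilinear map, first layer. -/
def mulF (p : HI × HI) : glM →ₗ[ℂ] glM :=
  Finsupp.lsum ℂ fun r => LinearMap.toSpanSingleton ℂ glM
    (if (p.2).1 + (r.1).1 = 0 then Finsupp.single (p.1, r.2) 1 else 0)

/-- `glMul` as a bilinear map. -/
def mulLin : glM →ₗ[ℂ] glM →ₗ[ℂ] glM :=
  Finsupp.lsum ℂ fun p => LinearMap.toSpanSingleton ℂ (glM →ₗ[ℂ] glM) (mulF p)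

lemma mulLin_apply (x y : glM) : mulLin x y = glMul x y := by
  unfold mulLin glMul
  rw [Finsupp.lsum_apply, LinearMap.finsupp_sum_apply]
  apply Finsupp.sum_congr
  intro p _
  rw [LinearMap.toSpanSingleton_apply, LinearMap.smul_apply]
  unfold mulF
  rw [Finsupp.lsum_apply, Finsupp.smul_sum]
  apply Finsupp.sum_congr
  intro r _
  rw [LinearMap.toSpanSingleton_apply]
  split
  · rw [smul_smul, Finsupp.smul_single, smul_eq_mul, mul_one]
  · simp

/-- The reindexing equivalence. -/
def σEquiv (n : ℕ) (hn : 0 < n) : ((Fin n × Fin n) × (HI × HI)) ≃ (HI × HI) :=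
  (Equiv.prodProdProdComm (Fin n) (Fin n) HI HI).trans ((e₁ n hn).prodCongr (e₂ n hn))

/-- The isomorphism. -/
def ΦEquiv (n : ℕ) (hn : 0 < n) :
    (Matrix (Fin n) (Fin n) ℂ) ⊗[ℂ] glM ≃ₗ[ℂ] glM :=
  (TensorProduct.congr (Matrix.stdBasis ℂ (Fin n) (Fin n)).repr
      (LinearEquiv.refl ℂ glM)).trans
    ((finsuppTensorFinsupp' ℂ (Fin n × Fin n) (HI × HI)).trans
      (Finsupp.domLCongr (σEquiv n hn)))

lemma Φ_single (n : ℕ) (hn : 0 < n) (i j : Fin n) (a b : HI) :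
    ΦEquiv n hn (Matrix.single i j (1 : ℂ) ⊗ₜ[ℂ] EE a b)
      = EE (e₁ n hn (i, a)) (e₂ n hn (j, b)) := by
  unfold ΦEquiv EE
  rw [LinearEquiv.trans_apply, LinearEquiv.trans_apply]
  rw [← Matrix.stdBasis_eq_single (R := ℂ) i j]
  rw [TensorProduct.congr_tmul, Module.Basis.repr_self, LinearEquiv.refl_apply]
  rw [finsuppTensorFinsupp'_single_tmul_single, Finsupp.domLCongr_apply,
    Finsupp.domCongr_apply, Finsupp.equivMapDomain_single]
  simp [σEquiv, Equiv.prodProdProdComm]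

/-- Multiplicativity on basis elements. -/
lemma key (n : ℕ) (hn : 0 < n) (i j i' j' : Fin n) (a b c d : HI) :
    ΦEquiv n hn ((Matrix.single i j (1 : ℂ) * Matrix.single i' j' (1 : ℂ))
        ⊗ₜ[ℂ] glMul (EE a b) (EE c d))
      = glMul (ΦEquiv n hn (Matrix.single i j (1 : ℂ) ⊗ₜ[ℂ] EE a b))
          (ΦEquiv n hn (Matrix.single i' j' (1 : ℂ) ⊗ₜ[ℂ] EE c d)) := by
  rw [Φ_single, Φ_single, glMul_EE, glMul_EE]
  by_cases h1 : j = i'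
  · subst h1
    rw [Matrix.single_mul_single_same, one_mul]
    by_cases h2 : b.1 + c.1 = 0
    · rw [if_pos h2, if_pos ((cond_iff n hn j j b c).mpr ⟨h2, rfl⟩), Φ_single]
    · rw [if_neg h2, TensorProduct.tmul_zero,
        if_neg (fun h => h2 ((cond_iff n hn j j b c).mp h).1)]
      exact (ΦEquiv n hn).map_zero
  · rw [Matrix.single_mul_single_of_ne (h := h1), TensorProduct.zero_tmul,
      if_neg (fun h => h1 ((cond_iff n hn j i' b c).mp h).2)]
    exact (ΦEquiv n hn).map_zero

/-- (3.2)/(3.11): `M_n(ℂ) ⊗ gl(∞) ≅ gl(∞)` as associative algebras, via the linear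
equivalence sending `E_{i,j} ⊗ E_{l+1/2,k-1/2}` to `E_{ln+i-1/2, kn-j+1/2}` for
`i, j ∈ {1,…,n}` and `l, k ∈ ℤ`. -/
theorem matrix_tensor_glInfinity_iso (n : ℕ) (hn : 0 < n) :
    ∃ Φ : (Matrix (Fin n) (Fin n) ℂ) ⊗[ℂ] glM ≃ₗ[ℂ] glM,
      (∀ (i j : Fin n) (l k : ℤ),
        Φ (Matrix.single i j (1 : ℂ) ⊗ₜ[ℂ] EE (hf l) (hf (k - 1)))
          = EE (hf (l * n + (i : ℕ))) (hf (k * n - (j : ℕ) - 1))) ∧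
      (∀ (A B : Matrix (Fin n) (Fin n) ℂ) (x y : glM),
        Φ ((A * B) ⊗ₜ[ℂ] glMul x y) = glMul (Φ (A ⊗ₜ[ℂ] x)) (Φ (B ⊗ₜ[ℂ] y))) := by
  refine ⟨ΦEquiv n hn, ?_, ?_⟩
  · intro i j l k
    rw [Φ_single, e₁_apply, e₂_apply, toZ_hf, toZ_hf]
    congr 2
    ring
  · -- multiplicativity: extend the basis case by multilinearity
    have main : ∀ u v : (Matrix (Fin n) (Fin n) ℂ) ⊗[ℂ] glM,
        ΦEquiv n hn (TensorProduct.map₂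
            (LinearMap.mul ℂ (Matrix (Fin n) (Fin n) ℂ)) mulLin u v)
          = mulLin (ΦEquiv n hn u) (ΦEquiv n hn v) := by
      suffices h : (TensorProduct.map₂ (LinearMap.mul ℂ (Matrix (Fin n) (Fin n) ℂ))
            mulLin).compr₂ (ΦEquiv n hn).toLinearMap
          = (mulLin.comp (ΦEquiv n hn).toLinearMap).compl₂ (ΦEquiv n hn).toLinearMap by
        intro u v
        have := LinearMap.congr_fun (LinearMap.congr_fun h u) v
        simpa using this
      apply TensorProduct.ext
      apply Module.Basis.ext (Matrix.stdBasis ℂ (Fin n) (Fin n))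
      rintro ⟨i, j⟩
      apply Module.Basis.ext Finsupp.basisSingleOne
      rintro ⟨a, b⟩
      apply TensorProduct.ext
      apply Module.Basis.ext (Matrix.stdBasis ℂ (Fin n) (Fin n))
      rintro ⟨i', j'⟩
      apply Module.Basis.ext Finsupp.basisSingleOne
      rintro ⟨c, d⟩
      have hsingle : (Finsupp.basisSingleOne : Module.Basis (HI × HI) ℂ glM) (a, b) = EE a b := by
        simp [EE]
      have hsingle' : (Finsupp.basisSingleOne : Module.Basis (HI × HI) ℂ glM) (c, d) = EE c d := by
        simp [EE]
      simp only [LinearMap.compr₂_apply, LinearMap.compl₂_apply, LinearMap.comp_apply, LinearMap.compr₂ₛₗ_apply,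
        TensorProduct.mk_apply,
        Matrix.stdBasis_eq_single, hsingle, hsingle',
        TensorProduct.map₂_apply_tmul, TensorProduct.map_tmul,
        LinearMap.mul_apply', LinearEquiv.coe_coe]
      rw [mulLin_apply, mulLin_apply]
      exact key n hn i j i' j' a b c d
    intro A B x y
    have := main (A ⊗ₜ[ℂ] x) (B ⊗ₜ[ℂ] y)
    rw [TensorProduct.map₂_apply_tmul, TensorProduct.map_tmul] at this
    simpa [mulLin_apply] using this
end
end
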